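/- For every noncrossing hypertree τ, the Hasse diagram of its hyperedge poset, viewed as an undirected graph on the hyperedges of τ, is a tree; its edges are exactly the pairs of hyperedges sharing a vertex that are adjacent in the local linear ordering at that vertex. -/

import Mathlib

/-- An alternating path in a hypergraph: a list of vertices and a list of hyperedges,
with each hyperedge belonging to the hypergraph and containing the two vertices around it. -/
def IsHyperPath {V : Type*} (E : Finset (Finset V)) : List V → List (Finset V) → Prop
  | [_], [] => True
  | u :: v :: vs, e :: es => e ∈ E ∧ u ∈ e ∧ v ∈ e ∧ IsHyperPath E (v :: vs) es
  | _, _ => False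

/-- Two vertices are joined by a path in the hypergraph. -/
def Reachable {V : Type*} (E : Finset (Finset V)) (u v : V) : Prop :=
  ∃ vs es, IsHyperPath E vs es ∧ vs.head? = some u ∧ vs.getLast? = some v

/-- Every pair of vertices is joined by a path. -/
def Connected {V : Type*} (E : Finset (Finset V)) : Prop := ∀ u v, Reachable E u v

/-- A nontrivial simple cycle: a closed path of length at least two with distinct
hyperedges and distinct vertices except that the endpoints are equal. -/
def HasSimpleCycle {V : Type*} (E : Finset (Finset V)) : Prop :=
  ∃ (vs : List V) (es : List (Finset V)), IsHyperPath E vs es ∧ 2 ≤ es.length ∧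
    es.Nodup ∧ vs.dropLast.Nodup ∧ vs.head? = vs.getLast?

/-- A hyperforest: hyperedges have size at least two and there are no nontrivial simple cycles. -/
def IsHyperforest {V : Type*} (E : Finset (Finset V)) : Prop :=
  (∀ e ∈ E, 2 ≤ e.card) ∧ ¬ HasSimpleCycle E

/-- A hypertree is a connected hyperforest. -/
def IsHypertree {V : Type*} (E : Finset (Finset V)) : Prop := IsHyperforest E ∧ Connected E
/-- The vertices of a convex polygon with `m` vertices, realized on the unit circle. -/
noncomputable def vtx (m : ℕ) (i : Fin m) : ℝ × ℝ :=
  (Real.cos (2 * Real.pi * (i : ℕ) / m), Real.sin (2 * Real.pi * (i : ℕ) / m))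

/-- Two subsets of the vertices of a convex polygon are weakly noncrossing when their
convex hulls have at most one point in common, and that point is a common vertex. -/
def WeaklyNoncrossing (m : ℕ) (A B : Finset (Fin m)) : Prop :=
  (convexHull ℝ (vtx m '' ↑A) ∩ convexHull ℝ (vtx m '' ↑B)).Subsingleton ∧
    convexHull ℝ (vtx m '' ↑A) ∩ convexHull ℝ (vtx m '' ↑B) ⊆ vtx m '' ↑(A ∩ B)

/-- A noncrossing hyperforest: a hyperforest whose hyperedges are pairwise weakly noncrossing. -/
def IsNCHyperforest (m : ℕ) (E : Finset (Finset (Fin m))) : Prop :=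
  IsHyperforest E ∧ ∀ e ∈ E, ∀ f ∈ E, e ≠ f → WeaklyNoncrossing m e f

/-- A noncrossing hypertree: a connected noncrossing hyperforest. -/
def IsNCHypertree (m : ℕ) (E : Finset (Finset (Fin m))) : Prop :=
  IsNCHyperforest m E ∧ Connected E
/-- The clockwise offset from `v` to `w` around the polygon. -/
def offsetFrom (m : ℕ) (v w : Fin m) : ℕ := (w.val + m - v.val) % m

/-- The local linear order at a vertex `v`: hyperedge `e` is to the left of hyperedge `f`
(both containing `v`) when the other vertices of `e` come earlier in clockwise order from `v`. -/
def LocalLt (m : ℕ) (v : Fin m) (e f : Finset (Fin m)) : Prop :=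
  ((e.erase v).image (offsetFrom m v)).min < ((f.erase v).image (offsetFrom m v)).min

/-- One hyperedge of `E` is below another at some shared vertex. -/
def EdgeRel (m : ℕ) (E : Finset (Finset (Fin m))) (e f : Finset (Fin m)) : Prop :=
  e ∈ E ∧ f ∈ E ∧ ∃ v, v ∈ e ∧ v ∈ f ∧ LocalLt m v e f

/-- The hyperedge poset order: the reflexive-transitive closure of the local linear orders. -/
def HLe (m : ℕ) (E : Finset (Finset (Fin m))) (e f : Finset (Fin m)) : Prop :=
  Relation.ReflTransGen (EdgeRel m E) e f

/-- Strict hyperedge poset order. -/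
def HLt (m : ℕ) (E : Finset (Finset (Fin m))) (e f : Finset (Fin m)) : Prop :=
  HLe m E e f ∧ e ≠ f

/-- Covering relation in the hyperedge poset. -/
def HCov (m : ℕ) (E : Finset (Finset (Fin m))) (e f : Finset (Fin m)) : Prop :=
  HLt m E e f ∧ ∀ g, ¬ (HLt m E e g ∧ HLt m E g f)


section NCHTGeneric
variable {V : Type*} {E : Finset (Finset V)}

lemma isHyperPath_range' (v : ℕ → V) (g : ℕ → Finset V) :
    ∀ (n s : ℕ), (∀ k, s ≤ k → k < s + n → g k ∈ E ∧ v k ∈ g k ∧ v (k+1) ∈ g k) →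
    IsHyperPath E ((List.range' s (n+1)).map v) ((List.range' s n).map g) := by
  intro n
  induction n with
  | zero => intro s _; simp [List.range'_succ, IsHyperPath]
  | succ n IH =>
    intro s h
    rw [List.range'_succ (s := s) (n := n+1), List.range'_succ (s := s+1) (n := n), List.range'_succ (s := s) (n := n)]
    simp only [List.map_cons]
    have hs := h s le_rfl (by omega)
    have heq : (List.range' (s+1) (n+1)).map v = v (s+1) :: (List.range' (s+1+1) n).map v := by
      rw [List.range'_succ]; simp
    refine ⟨hs.1, hs.2.1, ?_, ?_⟩
    · have := hs.2.2; simpa using this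
    · have h2 := IH (s+1) (fun k hk1 hk2 => h k (by omega) (by omega))
      rw [heq] at h2
      exact h2

lemma hasSimpleCycle_of_fn (v : ℕ → V) (g : ℕ → Finset V) (n : ℕ) (hn : 2 ≤ n)
    (hwalk : ∀ k < n, g k ∈ E ∧ v k ∈ g k ∧ v (k+1) ∈ g k)
    (hclosed : v n = v 0)
    (hgdist : ∀ i j, i < j → j < n → g i ≠ g j)
    (hvdist : ∀ i j, i < j → j < n → v i ≠ v j) : HasSimpleCycle E := by
  refine ⟨(List.range (n+1)).map v, (List.range n).map g, ?_, ?_, ?_, ?_, ?_⟩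
  · rw [List.range_eq_range', List.range_eq_range']
    exact isHyperPath_range' v g n 0 (fun k h1 h2 => hwalk k (by omega))
  · simp [hn]
  · refine (List.nodup_range (n := n)).map_on ?_
    intro x hx y hy hxy
    rw [List.mem_range] at hx hy
    by_contra hne
    rcases Nat.lt_or_ge x y with h | h
    · exact hgdist x y h hy hxy
    · exact hgdist y x (by omega) hx hxy.symm
  · have : ((List.range (n+1)).map v).dropLast = (List.range n).map v := by
      rw [List.range_succ, List.map_append]
      exact List.dropLast_concat
    rw [this]
    refine (List.nodup_range (n := n)).map_on ?_
    intro x hx y hy hxy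
    rw [List.mem_range] at hx hy
    by_contra hne
    rcases Nat.lt_or_ge x y with h | h
    · exact hvdist x y h hy hxy
    · exact hvdist y x (by omega) hx hxy.symm
  · rw [List.range_succ, List.map_append]
    simp only [List.map_cons, List.map_nil]
    rw [List.getLast?_concat]
    obtain ⟨n', rfl⟩ : ∃ n', n = n'+1 := ⟨n-1, by omega⟩
    rw [List.range_succ_eq_map]
    simp [hclosed]


lemma closedWalk_simpleCycle :
    ∀ n, 2 ≤ n → ∀ (v : ℕ → V) (g : ℕ → Finset V),
    (∀ k < n, g k ∈ E ∧ v k ∈ g k ∧ v (k+1) ∈ g k) → v n = v 0 →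
    (∀ i j, i < j → j < n → g i ≠ g j) → (∃ k, k < n ∧ v k ≠ v (k+1)) →
    HasSimpleCycle E := by
  intro n
  induction n using Nat.strong_induction_on with | _ n IH =>
  intro hn v g hwalk hclosed hgdist hex
  by_cases hadj : ∃ k, k < n ∧ v k = v (k+1)
  · obtain ⟨k, hk, hkeq⟩ := hadj
    have hn3 : 3 ≤ n := by
      by_contra hlt
      have hn2 : n = 2 := by omega
      subst hn2
      obtain ⟨j, hj, hne⟩ := hex
      have hj2 : j = 0 ∨ j = 1 := by omega
      have hk2 : k = 0 ∨ k = 1 := by omega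
      have hcl : v 2 = v 0 := hclosed
      rcases hj2 with rfl | rfl <;> rcases hk2 with rfl | rfl
      · exact hne hkeq
      · exact hne (by rw [show (0:ℕ)+1 = 1 from rfl, hkeq, hcl])
      · exact hne (by rw [show (1:ℕ)+1 = 2 from rfl, hcl, ← hkeq])
      · exact hne hkeq
    refine IH (n-1) (by omega) (by omega)
      (fun i => if i ≤ k then v i else v (i+1))
      (fun i => if i < k then g i else g (i+1)) ?_ ?_ ?_ ?_
    · intro j hj
      rcases Nat.lt_trichotomy j k with h1 | h1 | h1
      · simp only [if_pos h1, if_pos h1.le, if_pos (by omega : j+1 ≤ k)]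
        exact hwalk j (by omega)
      · subst h1
        have hjn : j + 1 < n := by omega
        simp only [if_neg (lt_irrefl j), if_pos le_rfl, if_neg (by omega : ¬ j + 1 ≤ j)]
        exact ⟨(hwalk (j+1) hjn).1, hkeq ▸ (hwalk (j+1) hjn).2.1, (hwalk (j+1) hjn).2.2⟩
      · simp only [if_neg (by omega : ¬ j < k), if_neg (by omega : ¬ j ≤ k),
          if_neg (by omega : ¬ j + 1 ≤ k)]
        exact hwalk (j+1) (by omega)
    · simp only [if_pos (by omega : (0:ℕ) ≤ k)]
      by_cases h1 : n - 1 ≤ k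
      · have hkn : k = n - 1 := by omega
        simp only [if_pos h1]
        have : v (n-1) = v n := by rw [← hkn]; rw [hkeq]; congr 1; omega
        rw [this, hclosed]
      · simp only [if_neg h1]
        have : n - 1 + 1 = n := by omega
        rw [this, hclosed]
    · intro a b hab hbn
      by_cases h1 : a < k <;> by_cases h2 : b < k
      · simp only [if_pos h1, if_pos h2]
        exact hgdist a b hab (by omega)
      · simp only [if_pos h1, if_neg h2]
        exact hgdist a (b+1) (by omega) (by omega)
      · omega
      · simp only [if_neg h1, if_neg h2]
        exact hgdist (a+1) (b+1) (by omega) (by omega)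
    · obtain ⟨j, hj, hne⟩ := hex
      have hjk : j ≠ k := fun h => hne (h ▸ hkeq)
      rcases Nat.lt_or_ge j k with h1 | h1
      · refine ⟨j, by omega, ?_⟩
        simp only [if_pos h1.le, if_pos (by omega : j + 1 ≤ k)]
        exact hne
      · have hjk' : k < j := by omega
        refine ⟨j - 1, by omega, ?_⟩
        have hj1 : j - 1 + 1 = j := by omega
        show (if j - 1 ≤ k then v (j-1) else v (j-1+1)) ≠
          (if j - 1 + 1 ≤ k then v (j-1+1) else v (j-1+1+1))
        rw [hj1]
        by_cases h2 : j - 1 ≤ k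
        · have hkj : k = j - 1 := by omega
          rw [if_pos h2, if_neg (by omega : ¬ j ≤ k)]
          have hv : v (j - 1) = v j := by
            have h3 := hkeq
            rw [hkj] at h3
            rwa [hj1] at h3
          rw [hv]
          exact hne
        · rw [if_neg h2, if_neg (by omega : ¬ j ≤ k)]
          exact hne
  · push_neg at hadj
    by_cases hvd : ∀ i j, i < j → j < n → v i ≠ v j
    · exact hasSimpleCycle_of_fn v g n hn hwalk hclosed hgdist hvd
    · push_neg at hvd
      obtain ⟨i, j, hij, hjn, heq⟩ := hvd
      have h2 : i + 2 ≤ j := by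
        by_contra h
        have : j = i + 1 := by omega
        exact hadj i (by omega) (this ▸ heq)
      refine IH (j-i) (by omega) (by omega) (fun k => v (i+k)) (fun k => g (i+k)) ?_ ?_ ?_ ?_
      · intro k hkji
        show g (i+k) ∈ E ∧ v (i+k) ∈ g (i+k) ∧ v (i+(k+1)) ∈ g (i+k)
        have e1 : i + (k+1) = (i+k)+1 := by omega
        rw [e1]
        exact hwalk (i+k) (by omega)
      · show v (i + (j-i)) = v (i+0)
        have e1 : i + (j-i) = j := by omega
        rw [e1, Nat.add_zero]
        exact heq.symm
      · intro a b hab hb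
        exact hgdist (i+a) (i+b) (by omega) (by omega)
      · refine ⟨0, by omega, ?_⟩
        show v (i+0) ≠ v (i+(0+1))
        have e1 : i + 0 = i := by omega
        have e2 : i + (0+1) = i + 1 := by omega
        rw [e1, e2]
        exact hadj i (by omega)

lemma nodup_map_range {α : Type*} (f : ℕ → α) (n : ℕ)
    (h : (List.map f (List.range n)).Nodup) : ∀ i j, i < j → j < n → f i ≠ f j := by
  intro i j hij hj hf
  rw [List.Nodup, List.pairwise_map] at h
  have := (List.pairwise_iff_getElem.mp h) i j (by simp; omega) (by simpa) (by simpa)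
  simp only [List.getElem_range] at this
  exact this hf

lemma support_eq_map_getVert {V : Type*} {G : SimpleGraph V} : ∀ {u v : V} (p : G.Walk u v),
    p.support = (List.range (p.length + 1)).map p.getVert := by
  intro u v p
  induction p with
  | nil => simp [SimpleGraph.Walk.getVert]
  | cons h q IH =>
    rw [SimpleGraph.Walk.support_cons, SimpleGraph.Walk.length_cons, IH]
    rw [List.range_succ_eq_map (n := q.length + 1)]
    simp only [List.map_cons, List.map_map]
    first
    | rfl
    | · congr 1
        apply List.map_congr_left
        intro k _
        simp [SimpleGraph.Walk.getVert_cons_succ]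


end NCHTGeneric

section NCHTAux
variable {m : ℕ} {E : Finset (Finset (Fin m))}

lemma offsetFrom_inj (v : Fin m) {a b : Fin m} (h : offsetFrom m v a = offsetFrom m v b) :
    a = b := by
  unfold offsetFrom at h
  have hv : v.val ≤ m := v.2.le
  have ha : a.val < m := a.2
  have hb : b.val < m := b.2
  have h1 : a.val + m - v.val = a.val + (m - v.val) := by omega
  have h2 : b.val + m - v.val = b.val + (m - v.val) := by omega
  rw [h1, h2] at h
  have := Nat.ModEq.add_right_cancel' (c := m - v.val) (n := m) h
  have := Nat.ModEq.eq_of_lt_of_lt this ha hb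
  exact Fin.ext this

lemma sharedEq (hnc : ¬ HasSimpleCycle E) {e f : Finset (Fin m)} {a b : Fin m}
    (he : e ∈ E) (hf : f ∈ E) (hef : e ≠ f)
    (hae : a ∈ e) (haf : a ∈ f) (hbe : b ∈ e) (hbf : b ∈ f) : a = b := by
  by_contra hab
  exact hnc ⟨[a, b, a], [e, f], ⟨he, hae, hbe, hf, hbf, haf, trivial⟩, by simp,
    by simp [hef], by simp [hab], by simp⟩

lemma lkey_ne (hcard : ∀ e ∈ E, 2 ≤ e.card) (hnc : ¬ HasSimpleCycle E)
    {e f : Finset (Fin m)} {v : Fin m} (he : e ∈ E) (hf : f ∈ E) (hef : e ≠ f)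
    (hv : v ∈ e) (hv' : v ∈ f) :
    ((e.erase v).image (offsetFrom m v)).min ≠ ((f.erase v).image (offsetFrom m v)).min := by
  intro hk
  have hene : ((e.erase v).image (offsetFrom m v)).Nonempty := by
    apply Finset.Nonempty.image
    rw [← Finset.card_pos, Finset.card_erase_of_mem hv]
    have := hcard e he; omega
  obtain ⟨a, ha⟩ := Finset.min_of_nonempty hene
  have ha1 : a ∈ (e.erase v).image (offsetFrom m v) := Finset.mem_of_min ha
  have ha2 : a ∈ (f.erase v).image (offsetFrom m v) := Finset.mem_of_min (hk ▸ ha)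
  obtain ⟨w1, hw1, ho1⟩ := Finset.mem_image.mp ha1
  obtain ⟨w2, hw2, ho2⟩ := Finset.mem_image.mp ha2
  have hw : w1 = w2 := offsetFrom_inj v (by rw [ho1, ho2])
  subst hw
  have h1 := Finset.mem_erase.mp hw1
  have h2 := Finset.mem_erase.mp hw2
  exact h1.1 (sharedEq hnc he hf hef h1.2 h2.2 hv hv')

lemma localLt_total (hcard : ∀ e ∈ E, 2 ≤ e.card) (hnc : ¬ HasSimpleCycle E)
    {e f : Finset (Fin m)} {v : Fin m} (he : e ∈ E) (hf : f ∈ E) (hef : e ≠ f)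
    (hv : v ∈ e) (hv' : v ∈ f) : LocalLt m v e f ∨ LocalLt m v f e :=
  (lkey_ne hcard hnc he hf hef hv hv').lt_or_gt


/-- `e` and `f` are consecutive (e just below f) in the local order at some shared vertex. -/
def Consec (m : ℕ) (E : Finset (Finset (Fin m))) (e f : Finset (Fin m)) : Prop :=
  e ∈ E ∧ f ∈ E ∧ ∃ v : Fin m, v ∈ e ∧ v ∈ f ∧ LocalLt m v e f ∧
    ¬ ∃ g ∈ E, v ∈ g ∧ LocalLt m v e g ∧ LocalLt m v g f

lemma LocalLt.ne' {v : Fin m} {e f : Finset (Fin m)} (h : LocalLt m v e f) : e ≠ f := by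
  rintro rfl; exact lt_irrefl _ h

lemma consec_ne {e f : Finset (Fin m)} (h : Consec m E e f) : e ≠ f := by
  obtain ⟨_, _, v, _, _, hlt, _⟩ := h; exact hlt.ne'

lemma consec_edgeRel {e f : Finset (Fin m)} (h : Consec m E e f) : EdgeRel m E e f := by
  obtain ⟨he, hf, v, hv, hv', hlt, _⟩ := h; exact ⟨he, hf, v, hv, hv', hlt⟩

lemma consec_asymm (hnc : ¬ HasSimpleCycle E) {e f : Finset (Fin m)}
    (h1 : Consec m E e f) (h2 : Consec m E f e) : False := by
  obtain ⟨he, hf, v, hv, hv', hlt, _⟩ := h1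
  obtain ⟨_, _, w, hw, hw', hlt', _⟩ := h2
  have : v = w := sharedEq hnc he hf hlt.ne' hv hv' hw' hw
  subst this
  exact lt_asymm hlt hlt'

open Classical in
lemma rtg_consec (hcard : ∀ e ∈ E, 2 ≤ e.card) (hnc : ¬ HasSimpleCycle E) :
    ∀ (n : ℕ) {e f : Finset (Fin m)} {v : Fin m}, e ∈ E → f ∈ E → v ∈ e → v ∈ f →
    LocalLt m v e f →
    (E.filter (fun g => v ∈ g ∧ LocalLt m v e g ∧ LocalLt m v g f)).card ≤ n →
    Relation.ReflTransGen (Consec m E) e f := by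
  intro n
  induction n with
  | zero =>
    intro e f v he hf hv hv' hlt hcardle
    refine Relation.ReflTransGen.single ⟨he, hf, v, hv, hv', hlt, ?_⟩
    rintro ⟨g, hg, hvg, h1, h2⟩
    have : g ∈ E.filter (fun g => v ∈ g ∧ LocalLt m v e g ∧ LocalLt m v g f) :=
      Finset.mem_filter.mpr ⟨hg, hvg, h1, h2⟩
    have := Finset.card_pos.mpr ⟨g, this⟩
    omega
  | succ n IH =>
    intro e f v he hf hv hv' hlt hcardle
    by_cases hB : (E.filter (fun g => v ∈ g ∧ LocalLt m v e g ∧ LocalLt m v g f)).Nonempty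
    · obtain ⟨g₀, hg₀, hmin⟩ := Finset.exists_min_image _
        (fun g => ((g.erase v).image (offsetFrom m v)).min) hB
      obtain ⟨hg₀E, hvg₀, hlt1, hlt2⟩ := Finset.mem_filter.mp hg₀
      have step : Consec m E e g₀ := by
        refine ⟨he, hg₀E, v, hv, hvg₀, hlt1, ?_⟩
        rintro ⟨h, hh, hvh, hh1, hh2⟩
        have hmem : h ∈ E.filter (fun g => v ∈ g ∧ LocalLt m v e g ∧ LocalLt m v g f) :=
          Finset.mem_filter.mpr ⟨hh, hvh, hh1, lt_trans hh2 hlt2⟩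
        exact absurd hh2 (not_lt.mpr (hmin h hmem))
      refine Relation.ReflTransGen.head step (IH hg₀E hf hvg₀ hv' hlt2 ?_)
      have hss : E.filter (fun g => v ∈ g ∧ LocalLt m v g₀ g ∧ LocalLt m v g f) ⊂
          E.filter (fun g => v ∈ g ∧ LocalLt m v e g ∧ LocalLt m v g f) := by
        constructor
        · intro g hg
          obtain ⟨hgE, hvg, ha, hb⟩ := Finset.mem_filter.mp hg
          exact Finset.mem_filter.mpr ⟨hgE, hvg, lt_trans hlt1 ha, hb⟩
        · intro hsub
          have := hsub hg₀
          obtain ⟨_, _, hbad, _⟩ := Finset.mem_filter.mp this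
          exact lt_irrefl _ hbad
      have := Finset.card_lt_card hss
      omega
    · rw [Finset.not_nonempty_iff_eq_empty] at hB
      refine Relation.ReflTransGen.single ⟨he, hf, v, hv, hv', hlt, ?_⟩
      rintro ⟨g, hg, hvg, h1, h2⟩
      have : g ∈ E.filter (fun g => v ∈ g ∧ LocalLt m v e g ∧ LocalLt m v g f) :=
        Finset.mem_filter.mpr ⟨hg, hvg, h1, h2⟩
      rw [hB] at this
      exact absurd this (Finset.notMem_empty g)

lemma edgeRel_rtg (hcard : ∀ e ∈ E, 2 ≤ e.card) (hnc : ¬ HasSimpleCycle E)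
    {e f : Finset (Fin m)} (h : EdgeRel m E e f) :
    Relation.ReflTransGen (Consec m E) e f := by
  obtain ⟨he, hf, v, hv, hv', hlt⟩ := h
  exact rtg_consec hcard hnc _ he hf hv hv' hlt le_rfl

lemma hle_iff (hcard : ∀ e ∈ E, 2 ≤ e.card) (hnc : ¬ HasSimpleCycle E)
    {e f : Finset (Fin m)} : HLe m E e f ↔ Relation.ReflTransGen (Consec m E) e f := by
  constructor
  · intro h
    have := Relation.ReflTransGen.mono (p := Relation.ReflTransGen (Consec m E))
      (fun a b hab => edgeRel_rtg hcard hnc hab) e f h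
    rwa [Relation.reflTransGen_idem] at this
  · intro h
    exact Relation.ReflTransGen.mono (fun a b hab => consec_edgeRel hab) e f h

lemma rtg_fn {α : Type*} {r : α → α → Prop} {a b : α} (h : Relation.ReflTransGen r a b) :
    ∃ (n : ℕ) (w : ℕ → α), w 0 = a ∧ w n = b ∧ ∀ k < n, r (w k) (w (k+1)) := by
  induction h with
  | refl => exact ⟨0, fun _ => a, rfl, rfl, by omega⟩
  | @tail b c hab hbc IH =>
    obtain ⟨n, w, h0, hn, hs⟩ := IH
    refine ⟨n+1, fun k => if k ≤ n then w k else c, by simp [h0], by simp, ?_⟩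
    intro k hk
    rcases Nat.lt_or_ge k n with h | h
    · simp only [if_pos h.le, if_pos (by omega : k + 1 ≤ n)]
      exact hs k h
    · have hkn : k = n := by omega
      subst hkn
      simp only [if_pos le_rfl, if_neg (by omega : ¬ k + 1 ≤ k), hn]
      exact hbc

lemma fn_rtg {α : Type*} {r : α → α → Prop} (n : ℕ) (w : ℕ → α)
    (hs : ∀ k < n, r (w k) (w (k+1))) : Relation.ReflTransGen r (w 0) (w n) := by
  induction n with
  | zero => exact Relation.ReflTransGen.refl
  | succ n IH =>
    exact Relation.ReflTransGen.tail (IH (fun k hk => hs k (by omega))) (hs n (by omega))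


lemma nocyc (hcard : ∀ e ∈ E, 2 ≤ e.card) (hnc : ¬ HasSimpleCycle E)
    (n : ℕ) (hn : 3 ≤ n) (g : ℕ → Finset (Fin m))
    (hdist : ∀ i j, i < j → j < n → g i ≠ g j)
    (hlink : ∀ k, k < n → Consec m E (g k) (g ((k+1) % n)) ∨
      Consec m E (g ((k+1) % n)) (g k)) : False := by
  classical
  have hgE : ∀ j, j < n → g j ∈ E := by
    intro j hj
    rcases hlink j hj with h | h
    · exact h.1
    · exact h.2.1
  have hg0 : g 0 ∈ E := hgE 0 (by omega)
  have hFin : Nonempty (Fin m) := by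
    have := hcard _ hg0
    obtain ⟨x, hx⟩ := Finset.card_pos.mp (by omega : 0 < (g 0).card)
    exact ⟨x⟩
  obtain ⟨v₀⟩ := hFin
  have hP : ∀ k, ∃ u : Fin m, k < n → (u ∈ g k ∧ u ∈ g ((k+1) % n) ∧
      ((LocalLt m u (g k) (g ((k+1)%n)) ∧
        ¬∃ h ∈ E, u ∈ h ∧ LocalLt m u (g k) h ∧ LocalLt m u h (g ((k+1)%n))) ∨
       (LocalLt m u (g ((k+1)%n)) (g k) ∧
        ¬∃ h ∈ E, u ∈ h ∧ LocalLt m u (g ((k+1)%n)) h ∧ LocalLt m u h (g k)))) := by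
    intro k
    by_cases hk : k < n
    · rcases hlink k hk with ⟨_, _, w, hw1, hw2, hlt, hnb⟩ | ⟨_, _, w, hw1, hw2, hlt, hnb⟩
      · exact ⟨w, fun _ => ⟨hw1, hw2, Or.inl ⟨hlt, hnb⟩⟩⟩
      · exact ⟨w, fun _ => ⟨hw2, hw1, Or.inr ⟨hlt, hnb⟩⟩⟩
    · exact ⟨v₀, fun h => absurd h hk⟩
  choose u hu using hP
  have hu1 : ∀ k, k < n → u k ∈ g k := fun k hk => (hu k hk).1
  have hu2 : ∀ k, k < n → u k ∈ g ((k+1) % n) := fun k hk => (hu k hk).2.1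
  have gdist' : ∀ i j, i < n → j < n → i ≠ j → g i ≠ g j := by
    intro i j hi hj hij
    rcases Nat.lt_or_ge i j with h | h
    · exact hdist i j h hj
    · exact (hdist j i (by omega) hi).symm
  by_cases hall : ∀ j, j < n → u j = u 0
  · -- all witnesses equal: max-key argument
    set v := u 0 with hv_def
    have hv : ∀ j, j < n → v ∈ g j := by
      intro j hj
      have := hu1 j hj
      rwa [hall j hj] at this
    obtain ⟨i₀, hi₀mem, hmax⟩ := Finset.exists_max_image (Finset.range n)
      (fun i => (((g i).erase v).image (offsetFrom m v)).min) ⟨0, by simp; omega⟩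
    have hi₀ : i₀ < n := Finset.mem_range.mp hi₀mem
    set succ := (i₀ + 1) % n with hsucc_def
    set pred := (i₀ + (n-1)) % n with hpred_def
    have hsucc_lt : succ < n := Nat.mod_lt _ (by omega)
    have hpred_lt : pred < n := Nat.mod_lt _ (by omega)
    have hsucc_eq : succ = if i₀ + 1 = n then 0 else i₀ + 1 := by
      rw [hsucc_def]
      split_ifs with h
      · rw [h, Nat.mod_self]
      · exact Nat.mod_eq_of_lt (by omega)
    have hpred_eq : pred = if i₀ = 0 then n - 1 else i₀ - 1 := by
      rw [hpred_def]
      split_ifs with h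
      · have h2 : i₀ + (n-1) = n - 1 := by omega
        rw [h2]; exact Nat.mod_eq_of_lt (by omega)
      · have : i₀ + (n - 1) = (i₀ - 1) + n := by omega
        rw [this, Nat.add_mod_right]
        exact Nat.mod_eq_of_lt (by omega)
    have hps : (pred + 1) % n = i₀ := by
      rw [hpred_def, Nat.mod_add_mod]
      have : i₀ + (n-1) + 1 = i₀ + n := by omega
      rw [this, Nat.add_mod_right]
      exact Nat.mod_eq_of_lt hi₀
    have hsucc_ne : succ ≠ i₀ := by rw [hsucc_eq]; split_ifs <;> omega
    have hpred_ne : pred ≠ i₀ := by rw [hpred_eq]; split_ifs <;> omega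
    have hsp : succ ≠ pred := by
      rw [hsucc_eq, hpred_eq]; split_ifs <;> omega
    -- link at i₀ : between g i₀ and g succ
    have hPi := hu i₀ hi₀
    rw [hall i₀ hi₀] at hPi
    have hA : LocalLt m v (g succ) (g i₀) ∧
        ¬∃ h ∈ E, v ∈ h ∧ LocalLt m v (g succ) h ∧ LocalLt m v h (g i₀) := by
      rcases hPi.2.2 with ⟨hlt, _⟩ | h
      · exact absurd hlt (not_lt.mpr (hmax succ (Finset.mem_range.mpr hsucc_lt)))
      · exact h
    -- link at pred : between g pred and g i₀
    have hPp := hu pred hpred_lt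
    rw [hall pred hpred_lt, hps] at hPp
    have hB : LocalLt m v (g pred) (g i₀) ∧
        ¬∃ h ∈ E, v ∈ h ∧ LocalLt m v (g pred) h ∧ LocalLt m v h (g i₀) := by
      rcases hPp.2.2 with h | ⟨hlt, _⟩
      · exact h
      · exact absurd hlt (not_lt.mpr (hmax pred (Finset.mem_range.mpr hpred_lt)))
    have hAB : g succ ≠ g pred := gdist' succ pred hsucc_lt hpred_lt hsp
    rcases localLt_total (E := E) hcard hnc (hgE succ hsucc_lt) (hgE pred hpred_lt)
      hAB (hv succ hsucc_lt) (hv pred hpred_lt) with h | h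
    · exact hA.2 ⟨g pred, hgE pred hpred_lt, hv pred hpred_lt, h, hB.1⟩
    · exact hB.2 ⟨g succ, hgE succ hsucc_lt, hv succ hsucc_lt, h, hA.1⟩
  · -- not all equal: build a closed hyperwalk and get a simple cycle
    apply hnc
    refine closedWalk_simpleCycle n (by omega) (fun k => u (k % n)) (fun k => g ((k+1) % n))
      ?_ ?_ ?_ ?_
    · intro k hk
      have h1 : k % n = k := Nat.mod_eq_of_lt hk
      have h2 : (k+1) % n < n := Nat.mod_lt _ (by omega)
      show g ((k+1) % n) ∈ E ∧ u (k % n) ∈ g ((k+1) % n) ∧ u ((k+1) % n) ∈ g ((k+1) % n)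
      refine ⟨hgE _ h2, ?_, ?_⟩
      · rw [h1]; exact hu2 k hk
      · exact hu1 _ h2
    · show u (n % n) = u (0 % n)
      rw [Nat.mod_self, Nat.zero_mod]
    · intro i j hij hjn
      apply gdist' _ _ (Nat.mod_lt _ (by omega)) (Nat.mod_lt _ (by omega))
      have hi1 : (i+1) % n = i + 1 := Nat.mod_eq_of_lt (by omega)
      by_cases hj1 : j + 1 = n
      · rw [hi1, hj1, Nat.mod_self]; omega
      · rw [hi1, Nat.mod_eq_of_lt (by omega)]; omega
    · by_contra hnex
      push_neg at hnex
      apply hall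
      intro j hj
      induction j with
      | zero => rfl
      | succ j IHj =>
        have hjn : j < n := by omega
        have := hnex j hjn
        rw [Nat.mod_eq_of_lt hjn, Nat.mod_eq_of_lt hj] at this
        rw [← this]
        exact IHj (by omega)

/-- No closed positive-length `Consec`-walks. -/
lemma ncw (hcard : ∀ e ∈ E, 2 ≤ e.card) (hnc : ¬ HasSimpleCycle E) :
    ∀ n, 1 ≤ n → ∀ w : ℕ → Finset (Fin m),
    (∀ k < n, Consec m E (w k) (w (k+1))) → w n = w 0 → False := by
  intro n
  induction n using Nat.strong_induction_on with | _ n IH =>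
  intro hn w hs hclosed
  by_cases hdist : ∀ i j, i < j → j < n → w i ≠ w j
  · rcases Nat.lt_or_ge n 3 with h3 | h3
    · rcases Nat.lt_or_ge n 2 with h2 | h2
      · have hn1 : n = 1 := by omega
        have := hs 0 (by omega)
        rw [hn1] at hclosed
        rw [show (0:ℕ)+1 = 1 from rfl, hclosed] at this
        exact consec_ne this rfl
      · have hn2 : n = 2 := by omega
        have h1 := hs 0 (by omega)
        have h2' := hs 1 (by omega)
        rw [hn2] at hclosed
        rw [show (1:ℕ)+1 = 2 from rfl, hclosed] at h2'
        exact consec_asymm hnc h1 h2'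
    · refine nocyc hcard hnc n h3 w hdist ?_
      intro k hk
      by_cases hkn : k + 1 = n
      · left
        rw [hkn, Nat.mod_self, ← hclosed, ← hkn]
        exact hs k hk
      · left
        rw [Nat.mod_eq_of_lt (by omega)]
        exact hs k hk
  · push_neg at hdist
    obtain ⟨i, j, hij, hjn, heq⟩ := hdist
    refine IH (j - i) (by omega) (by omega) (fun k => w (i + k)) ?_ ?_
    · intro k hk
      show Consec m E (w (i+k)) (w (i+(k+1)))
      have e1 : i + (k+1) = (i+k)+1 := by omega
      rw [e1]
      exact hs (i+k) (by omega)
    · show w (i + (j - i)) = w (i + 0)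
      have e1 : i + (j-i) = j := by omega
      rw [e1, Nat.add_zero]
      exact heq.symm


lemma cp (hcard : ∀ e ∈ E, 2 ≤ e.card) (hnc : ¬ HasSimpleCycle E)
    {e f : Finset (Fin m)} (hco : Consec m E e f) :
    ∀ n, 2 ≤ n → ∀ w : ℕ → Finset (Fin m), w 0 = e → w n = f →
    (∀ k < n, Consec m E (w k) (w (k+1))) → False := by
  intro n
  induction n using Nat.strong_induction_on with | _ n IH =>
  intro hn w hw0 hwn hs
  have hef : e ≠ f := consec_ne hco
  have hne_e : ∀ k, 1 ≤ k → k ≤ n → w k ≠ e := by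
    intro k h1 h2 hk
    exact ncw hcard hnc k h1 w (fun j hj => hs j (by omega)) (by rw [hk, hw0])
  have hne_f : ∀ k, k < n → w k ≠ f := by
    intro k hkn hk
    refine ncw hcard hnc (n - k) (by omega) (fun j => w (k + j)) ?_ ?_
    · intro j hj
      show Consec m E (w (k+j)) (w (k+(j+1)))
      have e1 : k + (j+1) = (k+j)+1 := by omega
      rw [e1]
      exact hs (k+j) (by omega)
    · show w (k + (n - k)) = w (k + 0)
      have e1 : k + (n-k) = n := by omega
      rw [e1, Nat.add_zero, hwn, hk]
  by_cases hvd : ∀ i j, i < j → j ≤ n → w i ≠ w j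
  · refine nocyc hcard hnc (n+1) (by omega) w (fun i j hij hj => hvd i j hij (by omega)) ?_
    intro k hk
    by_cases hkn : k = n
    · right
      subst hkn
      rw [Nat.mod_self]
      rw [hw0, hwn]
      exact hco
    · left
      rw [Nat.mod_eq_of_lt (by omega)]
      exact hs k (by omega)
  · push_neg at hvd
    obtain ⟨i, j, hij, hjn, heq⟩ := hvd
    have hi1 : 1 ≤ i := by
      by_contra h
      have : i = 0 := by omega
      subst this
      rw [hw0] at heq
      exact hne_e j (by omega) hjn heq.symm
    have hj1 : j ≤ n - 1 := by
      by_contra h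
      have : j = n := by omega
      subst this
      rw [hwn] at heq
      exact hne_f i (by omega) heq
    refine IH (n - (j - i)) (by omega) (by omega)
      (fun k => if k ≤ i then w k else w (k + (j - i))) ?_ ?_ ?_
    · show (if 0 ≤ i then w 0 else w (0 + (j-i))) = e
      rw [if_pos (by omega : (0:ℕ) ≤ i), hw0]
    · show (if n - (j-i) ≤ i then w (n - (j-i)) else w (n - (j-i) + (j - i))) = f
      rw [if_neg (by omega : ¬ n - (j-i) ≤ i)]
      have e1 : n - (j-i) + (j-i) = n := by omega
      rw [e1, hwn]
    · intro k hk
      rcases Nat.lt_trichotomy k i with h | h | h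
      · show Consec m E (if k ≤ i then w k else w (k + (j-i)))
          (if k+1 ≤ i then w (k+1) else w (k+1 + (j-i)))
        rw [if_pos h.le, if_pos (by omega : k+1 ≤ i)]
        exact hs k (by omega)
      · show Consec m E (if k ≤ i then w k else w (k + (j-i)))
          (if k+1 ≤ i then w (k+1) else w (k+1 + (j-i)))
        rw [if_pos h.le, if_neg (by omega : ¬ k+1 ≤ i)]
        have e1 : k + 1 + (j - i) = j + 1 := by omega
        rw [e1, h, heq]
        exact hs j (by omega)
      · show Consec m E (if k ≤ i then w k else w (k + (j-i)))
          (if k+1 ≤ i then w (k+1) else w (k+1 + (j-i)))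
        rw [if_neg (by omega : ¬ k ≤ i), if_neg (by omega : ¬ k+1 ≤ i)]
        have e1 : k + 1 + (j - i) = (k + (j-i)) + 1 := by omega
        rw [e1]
        exact hs (k + (j-i)) (by omega)

lemma hcov_iff (hcard : ∀ e ∈ E, 2 ≤ e.card) (hnc : ¬ HasSimpleCycle E)
    {e f : Finset (Fin m)} : HCov m E e f ↔ Consec m E e f := by
  constructor
  · rintro ⟨⟨hle, hne⟩, hnob⟩
    have hrtg := (hle_iff hcard hnc).mp hle
    obtain ⟨n, w, hw0, hwn, hs⟩ := rtg_fn hrtg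
    have hn1 : 1 ≤ n := by
      rcases Nat.eq_zero_or_pos n with h | h
      · rw [h, hw0] at hwn; exact absurd hwn hne
      · exact h
    rcases eq_or_lt_of_le hn1 with h | h
    · have := hs 0 (by omega)
      rw [hw0] at this
      rw [show (0:ℕ)+1 = 1 from rfl, h, hwn] at this
      exact this
    · exfalso
      have hcons0 : Consec m E e (w 1) := by
        have := hs 0 (by omega)
        rwa [hw0] at this
      have hge : e ≠ w 1 := consec_ne hcons0
      have hgf : w 1 ≠ f := by
        intro hgf
        refine ncw hcard hnc (n-1) (by omega) (fun j => w (1+j)) ?_ ?_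
        · intro j hj
          show Consec m E (w (1+j)) (w (1+(j+1)))
          have e1 : 1 + (j+1) = (1+j)+1 := by omega
          rw [e1]
          exact hs (1+j) (by omega)
        · show w (1 + (n-1)) = w (1 + 0)
          have e1 : 1 + (n-1) = n := by omega
          rw [e1, Nat.add_zero, hwn, hgf]
      refine hnob (w 1) ⟨⟨(hle_iff hcard hnc).mpr (Relation.ReflTransGen.single hcons0), hge⟩,
        ⟨(hle_iff hcard hnc).mpr ?_, hgf⟩⟩
      have := fn_rtg (r := Consec m E) (n-1) (fun j => w (1+j)) ?_
      · show Relation.ReflTransGen (Consec m E) (w 1) f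
        have e1 : 1 + (n-1) = n := by omega
        rw [e1, hwn] at this
        simpa using this
      · intro j hj
        show Consec m E (w (1+j)) (w (1+(j+1)))
        have e1 : 1 + (j+1) = (1+j)+1 := by omega
        rw [e1]
        exact hs (1+j) (by omega)
  · intro hco
    refine ⟨⟨Relation.ReflTransGen.single (consec_edgeRel hco), consec_ne hco⟩, ?_⟩
    rintro g ⟨⟨hleg, hneg⟩, hlgf, hngf⟩
    obtain ⟨n1, w1, hw10, hw1n, hs1⟩ := rtg_fn ((hle_iff hcard hnc).mp hleg)
    obtain ⟨n2, w2, hw20, hw2n, hs2⟩ := rtg_fn ((hle_iff hcard hnc).mp hlgf)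
    have hn1 : 1 ≤ n1 := by
      rcases Nat.eq_zero_or_pos n1 with h | h
      · rw [h, hw10] at hw1n; exact absurd hw1n hneg
      · exact h
    have hn2 : 1 ≤ n2 := by
      rcases Nat.eq_zero_or_pos n2 with h | h
      · rw [h, hw20] at hw2n; exact absurd hw2n hngf
      · exact h
    refine cp hcard hnc hco (n1 + n2) (by omega)
      (fun k => if k ≤ n1 then w1 k else w2 (k - n1)) ?_ ?_ ?_
    · show (if 0 ≤ n1 then w1 0 else w2 (0 - n1)) = e
      rw [if_pos (by omega : (0:ℕ) ≤ n1), hw10]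
    · show (if n1 + n2 ≤ n1 then w1 (n1+n2) else w2 (n1 + n2 - n1)) = f
      rw [if_neg (by omega : ¬ n1 + n2 ≤ n1)]
      have e1 : n1 + n2 - n1 = n2 := by omega
      rw [e1, hw2n]
    · intro k hk
      rcases Nat.lt_trichotomy k n1 with h | h | h
      · show Consec m E (if k ≤ n1 then w1 k else w2 (k - n1))
          (if k+1 ≤ n1 then w1 (k+1) else w2 (k+1 - n1))
        rw [if_pos h.le, if_pos (by omega : k+1 ≤ n1)]
        exact hs1 k h
      · subst h
        show Consec m E (if k ≤ k then w1 k else w2 (k - k))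
          (if k+1 ≤ k then w1 (k+1) else w2 (k+1 - k))
        rw [if_pos le_rfl, if_neg (by omega : ¬ k+1 ≤ k)]
        have e1 : k + 1 - k = 1 := by omega
        rw [e1, hw1n, ← hw20]
        exact hs2 0 (by omega)
      · show Consec m E (if k ≤ n1 then w1 k else w2 (k - n1))
          (if k+1 ≤ n1 then w1 (k+1) else w2 (k+1 - n1))
        rw [if_neg (by omega : ¬ k ≤ n1), if_neg (by omega : ¬ k+1 ≤ n1)]
        have e1 : k + 1 - n1 = (k - n1) + 1 := by omega
        rw [e1]
        exact hs2 (k - n1) (by omega)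


lemma rtg_consecW (hcard : ∀ e ∈ E, 2 ≤ e.card) (hnc : ¬ HasSimpleCycle E)
    {e f : Finset (Fin m)} {v : Fin m} (he : e ∈ E) (hf : f ∈ E) (hv : v ∈ e) (hv' : v ∈ f)
    (hlt : LocalLt m v e f) : Relation.ReflTransGen (Consec m E) e f :=
  edgeRel_rtg hcard hnc ⟨he, hf, v, hv, hv', hlt⟩

lemma gr_adj (hcard : ∀ e ∈ E, 2 ≤ e.card) (hnc : ¬ HasSimpleCycle E)
    (x y : {e // e ∈ E}) :
    (SimpleGraph.fromRel fun a b : {e // e ∈ E} => HCov m E a.1 b.1).Adj x y ↔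
      (Consec m E x.1 y.1 ∨ Consec m E y.1 x.1) := by
  rw [SimpleGraph.fromRel_adj]
  constructor
  · rintro ⟨hne, h | h⟩
    · exact Or.inl ((hcov_iff hcard hnc).mp h)
    · exact Or.inr ((hcov_iff hcard hnc).mp h)
  · intro h
    refine ⟨?_, h.imp (hcov_iff hcard hnc).mpr (hcov_iff hcard hnc).mpr⟩
    rcases h with h | h
    · intro heq; exact consec_ne h (congrArg Subtype.val heq)
    · intro heq; exact consec_ne h (congrArg Subtype.val heq).symm

lemma rtg_reach (hcard : ∀ e ∈ E, 2 ≤ e.card) (hnc : ¬ HasSimpleCycle E)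
    {a : Finset (Fin m)} (ha : a ∈ E) :
    ∀ {b : Finset (Fin m)}, Relation.ReflTransGen (Consec m E) a b → ∀ (hb : b ∈ E),
    (SimpleGraph.fromRel fun a b : {e // e ∈ E} => HCov m E a.1 b.1).Reachable ⟨a, ha⟩ ⟨b, hb⟩ := by
  intro b h
  induction h with
  | refl => intro hb; exact SimpleGraph.Reachable.refl _
  | @tail b' c hab' hb'c IH =>
    intro hc
    have hbE : b' ∈ E := hb'c.1
    exact (IH hbE).trans (SimpleGraph.Adj.reachable
      ((gr_adj hcard hnc ⟨b', hbE⟩ ⟨c, hc⟩).mpr (Or.inl hb'c)))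

lemma samev (hcard : ∀ e ∈ E, 2 ≤ e.card) (hnc : ¬ HasSimpleCycle E)
    {a b : Finset (Fin m)} (ha : a ∈ E) (hb : b ∈ E) {u : Fin m} (hua : u ∈ a) (hub : u ∈ b) :
    (SimpleGraph.fromRel fun a b : {e // e ∈ E} => HCov m E a.1 b.1).Reachable ⟨a, ha⟩ ⟨b, hb⟩ := by
  by_cases hab : a = b
  · subst hab; exact SimpleGraph.Reachable.refl _
  · rcases localLt_total hcard hnc ha hb hab hua hub with h | h
    · exact rtg_reach hcard hnc ha (rtg_consecW hcard hnc ha hb hua hub h) hb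
    · exact (rtg_reach hcard hnc hb (rtg_consecW hcard hnc hb ha hub hua h) ha).symm

lemma reach_aux (hcard : ∀ e ∈ E, 2 ≤ e.card) (hnc : ¬ HasSimpleCycle E) :
    ∀ (es : List (Finset (Fin m))) (vs : List (Fin m)) (u w : Fin m),
    IsHyperPath E vs es → vs.head? = some u → vs.getLast? = some w →
    ∀ (a : Finset (Fin m)) (ha : a ∈ E), u ∈ a → ∀ (b : Finset (Fin m)) (hb : b ∈ E), w ∈ b →
    (SimpleGraph.fromRel fun a b : {e // e ∈ E} => HCov m E a.1 b.1).Reachable ⟨a, ha⟩ ⟨b, hb⟩ := by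
  intro es
  induction es with
  | nil =>
    intro vs u w hp hh hl a ha hua b hb hwb
    match vs, hp with
    | [x], _ =>
      have hu : x = u := by simpa using hh
      have hw : x = w := by simpa using hl
      subst hu
      exact samev hcard hnc ha hb hua (hw ▸ hwb)
  | cons e' es IH =>
    intro vs u w hp hh hl a ha hua b hb hwb
    match vs, hp with
    | x :: y :: t, hp =>
      obtain ⟨heE, hxe, hye, hrest⟩ := hp
      have hu : x = u := by simpa using hh
      subst hu
      have hl' : (y :: t).getLast? = some w := by
        rwa [List.getLast?_cons_cons] at hl
      have r1 := samev hcard hnc ha heE hua hxe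
      have r2 := IH (y :: t) y w hrest rfl hl' e' heE hye b hb hwb
      exact r1.trans r2

lemma gr_conn (hcard : ∀ e ∈ E, 2 ≤ e.card) (hnc : ¬ HasSimpleCycle E)
    (hconn : Connected E) (hne : E.Nonempty) :
    (SimpleGraph.fromRel fun a b : {e // e ∈ E} => HCov m E a.1 b.1).Connected := by
  rw [SimpleGraph.connected_iff]
  constructor
  · intro x y
    obtain ⟨u, hu⟩ := Finset.card_pos.mp (by have := hcard _ x.2; omega : 0 < x.1.card)
    obtain ⟨v, hv⟩ := Finset.card_pos.mp (by have := hcard _ y.2; omega : 0 < y.1.card)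
    obtain ⟨vs, es, hp, hh, hl⟩ := hconn u v
    exact reach_aux hcard hnc es vs u v hp hh hl x.1 x.2 hu y.1 y.2 hv
  · exact ⟨⟨hne.choose, hne.choose_spec⟩⟩

lemma gr_acyclic (hcard : ∀ e ∈ E, 2 ≤ e.card) (hnc : ¬ HasSimpleCycle E) :
    (SimpleGraph.fromRel fun a b : {e // e ∈ E} => HCov m E a.1 b.1).IsAcyclic := by
  intro x p hp
  have hlen := hp.three_le_length
  have hsup := support_eq_map_getVert p
  have htail : p.support.tail.Nodup := hp.support_nodup
  have htail' : p.support.tail = (List.range p.length).map (fun k => p.getVert (k+1)) := by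
    rw [hsup, List.range_succ_eq_map]
    simp only [List.map_cons, List.tail_cons, List.map_map]
    apply List.map_congr_left
    intro k _
    rfl
  rw [htail'] at htail
  have hd2 := nodup_map_range _ _ htail
  have hd : ∀ i j, i < j → j < p.length → p.getVert i ≠ p.getVert j := by
    intro i j hij hj
    rcases Nat.eq_zero_or_pos i with h0 | h0
    · subst h0
      have h0n : p.getVert 0 = p.getVert p.length := by
        rw [SimpleGraph.Walk.getVert_zero, SimpleGraph.Walk.getVert_length]
      rw [h0n]
      intro hf
      have := hd2 (j-1) (p.length - 1) (by omega) (by omega)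
      have ej : j - 1 + 1 = j := by omega
      have en : p.length - 1 + 1 = p.length := by omega
      rw [ej, en] at this
      exact this hf.symm
    · intro hf
      have := hd2 (i-1) (j-1) (by omega) (by omega)
      have ei : i - 1 + 1 = i := by omega
      have ej : j - 1 + 1 = j := by omega
      rw [ei, ej] at this
      exact this hf
  refine nocyc hcard hnc p.length (by omega) (fun k => (p.getVert k).1) ?_ ?_
  · intro i j hij hj hf
    exact hd i j hij hj (Subtype.ext hf)
  · intro k hk
    have hadj : (SimpleGraph.fromRel fun a b : {e // e ∈ E} => HCov m E a.1 b.1).Adj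
        (p.getVert k) (p.getVert ((k+1) % p.length)) := by
      by_cases h : k + 1 = p.length
      · rw [h, Nat.mod_self]
        have hstep := p.adj_getVert_succ (by omega : k < p.length)
        rw [h] at hstep
        have e0 : p.getVert p.length = p.getVert 0 := by
          rw [SimpleGraph.Walk.getVert_zero, SimpleGraph.Walk.getVert_length]
        rwa [e0] at hstep
      · rw [Nat.mod_eq_of_lt (by omega)]
        exact p.adj_getVert_succ (by omega)
    exact (gr_adj hcard hnc _ _).mp hadj

end NCHTAux

/-- For every noncrossing hypertree τ (with at least one hyperedge), the Hasse diagram of its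
hyperedge poset, viewed as an undirected graph on the hyperedges, is a tree, and its edges are
exactly the pairs of hyperedges sharing a vertex that are adjacent in the local linear
ordering at that vertex. -/
theorem stmt5 (m : ℕ) (E : Finset (Finset (Fin m))) (h : IsNCHypertree m E)
    (hne : E.Nonempty) :
    (SimpleGraph.fromRel (fun x y : {e // e ∈ E} => HCov m E x.1 y.1)).IsTree ∧
    ∀ x y : {e // e ∈ E},
      (SimpleGraph.fromRel (fun x y : {e // e ∈ E} => HCov m E x.1 y.1)).Adj x y ↔
      x.1 ≠ y.1 ∧ ∃ v : Fin m, v ∈ x.1 ∧ v ∈ y.1 ∧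
        ((LocalLt m v x.1 y.1 ∧ ¬ ∃ g ∈ E, v ∈ g ∧ LocalLt m v x.1 g ∧ LocalLt m v g y.1) ∨
         (LocalLt m v y.1 x.1 ∧ ¬ ∃ g ∈ E, v ∈ g ∧ LocalLt m v y.1 g ∧ LocalLt m v g x.1)) := by
  obtain ⟨⟨⟨hcard, hnc⟩, -⟩, hconn⟩ := h
  constructor
  · exact ⟨gr_conn hcard hnc hconn hne, gr_acyclic hcard hnc⟩
  · intro x y
    rw [gr_adj hcard hnc x y]
    constructor
    · rintro (⟨hx, hy, v, hv1, hv2, hlt, hnb⟩ | ⟨hy, hx, v, hvy, hvx, hlt, hnb⟩)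
      · exact ⟨hlt.ne', v, hv1, hv2, Or.inl ⟨hlt, hnb⟩⟩
      · exact ⟨hlt.ne'.symm, v, hvx, hvy, Or.inr ⟨hlt, hnb⟩⟩
    · rintro ⟨hnexy, v, hvx, hvy, ⟨hlt, hnb⟩ | ⟨hlt, hnb⟩⟩
      · exact Or.inl ⟨x.2, y.2, v, hvx, hvy, hlt, hnb⟩
      · exact Or.inr ⟨y.2, x.2, v, hvy, hvx, hlt, hnb⟩
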